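/- arXiv:1306.5358 — 4 statements merged into one kernel-verified Lean document; each statement's English description precedes it below -/
import Mathlib

section
/- For positive semidefinite matrices X and Y over ℂ of the same size, and real numbers p, q > 1 with 1/p + 1/q = 1, one has tr(XY) ≤ (1/p) tr(X^p) + (1/q) tr(Y^q). -/
open Matrix ComplexOrder

/-- Functional calculus for Hermitian matrices: apply `f` to the eigenvalues. -/
noncomputable def mfun {m : Type*} [Fintype m] [DecidableEq m] (f : ℝ → ℝ)
    (A : Matrix m m ℂ) : Matrix m m ℂ :=
  if hA : A.IsHermitian then
    (hA.eigenvectorUnitary : Matrix m m ℂ) *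
      Matrix.diagonal (fun i => (f (hA.eigenvalues i) : ℂ)) *
      (star (hA.eigenvectorUnitary : Matrix m m ℂ))
  else 0

/-- Real matrix power via the functional calculus. -/
noncomputable def mpow {m : Type*} [Fintype m] [DecidableEq m]
    (A : Matrix m m ℂ) (p : ℝ) : Matrix m m ℂ :=
  mfun (fun x => x ^ p) A

lemma mfun_trace {m : Type*} [Fintype m] [DecidableEq m] (f : ℝ → ℝ)
    {A : Matrix m m ℂ} (hA : A.IsHermitian) :
    (mfun f A).trace = ∑ i, (f (hA.eigenvalues i) : ℂ) := by
  rw [mfun, dif_pos hA, Matrix.trace_mul_cycle, Unitary.coe_star_mul_self,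
    Matrix.one_mul, Matrix.trace_diagonal]

theorem young_trace_inequality {n : ℕ} (X Y : Matrix (Fin n) (Fin n) ℂ)
    (hX : X.PosSemidef) (hY : Y.PosSemidef) (p q : ℝ) (hp : 1 < p) (hq : 1 < q)
    (hpq : 1 / p + 1 / q = 1) :
    (X * Y).trace ≤ (1 / p : ℂ) * (mpow X p).trace + (1 / q : ℂ) * (mpow Y q).trace := by
  have hXh := hX.isHermitian
  have hYh := hY.isHermitian
  have hpq' : p.HolderConjugate q := Real.holderConjugate_iff.mpr ⟨hp, by simpa [one_div] using hpq⟩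
  set U : Matrix (Fin n) (Fin n) ℂ := (hXh.eigenvectorUnitary : Matrix (Fin n) (Fin n) ℂ)
  set V : Matrix (Fin n) (Fin n) ℂ := (hYh.eigenvectorUnitary : Matrix (Fin n) (Fin n) ℂ)
  set W : Matrix (Fin n) (Fin n) ℂ := star U * V with hW
  set lam := hXh.eigenvalues with hlam
  set mu := hYh.eigenvalues with hmu
  have hlam0 : ∀ i, 0 ≤ lam i := fun i => hX.eigenvalues_nonneg i
  have hmu0 : ∀ j, 0 ≤ mu j := fun j => hY.eigenvalues_nonneg j
  set w : Fin n → Fin n → ℝ := fun i j => Complex.normSq (W i j) with hw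
  have hw0 : ∀ i j, 0 ≤ w i j := fun i j => Complex.normSq_nonneg _
  -- W is unitary
  have hU1 : star U * U = 1 := Unitary.coe_star_mul_self hXh.eigenvectorUnitary
  have hU2 : U * star U = 1 := Unitary.coe_mul_star_self hXh.eigenvectorUnitary
  have hV1 : star V * V = 1 := Unitary.coe_star_mul_self hYh.eigenvectorUnitary
  have hV2 : V * star V = 1 := Unitary.coe_mul_star_self hYh.eigenvectorUnitary
  have hWW : W * star W = 1 := by
    show star U * V * star (star U * V) = 1
    rw [Matrix.star_mul, star_star]
    calc star U * V * (star V * U) = star U * (V * star V) * U := by noncomm_ring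
      _ = 1 := by rw [hV2, Matrix.mul_one, hU1]
  have hWW' : star W * W = 1 := by
    show star (star U * V) * (star U * V) = 1
    rw [Matrix.star_mul, star_star]
    calc star V * U * (star U * V) = star V * (U * star U) * V := by noncomm_ring
      _ = 1 := by rw [hU2, Matrix.mul_one, hV1]
  -- row and column sums of w
  have hrow : ∀ i, ∑ j, w i j = 1 := by
    intro i
    have h := congrArg (fun M => M i i) hWW
    simp only [Matrix.mul_apply, Matrix.one_apply_eq, Matrix.conjTranspose_apply] at h
    have : ((∑ j, w i j : ℝ) : ℂ) = 1 := by
      push_cast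
      rw [← h]
      exact Finset.sum_congr rfl fun j _ => by
        simp [hw, Matrix.star_apply, Complex.mul_conj]
    exact_mod_cast this
  have hcol : ∀ j, ∑ i, w i j = 1 := by
    intro j
    have h := congrArg (fun M => M j j) hWW'
    simp only [Matrix.mul_apply, Matrix.one_apply_eq, Matrix.conjTranspose_apply] at h
    have : ((∑ i, w i j : ℝ) : ℂ) = 1 := by
      push_cast
      rw [← h]
      exact Finset.sum_congr rfl fun i _ => by
        simp [hw, Matrix.star_apply, Complex.mul_conj, mul_comm]
    exact_mod_cast this
  -- trace of X * Y
  have hV : V = U * W := by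
    rw [hW, ← Matrix.mul_assoc, hU2, Matrix.one_mul]
  have hXY : (X * Y).trace =
      ((∑ i, ∑ j, lam i * mu j * w i j : ℝ) : ℂ) := by
    have hXs : X = U * Matrix.diagonal (fun i => (lam i : ℂ)) * star U := by
      simpa [Function.comp_def] using hXh.spectral_theorem
    have hYs : Y = U * (W * Matrix.diagonal (fun j => (mu j : ℂ)) * star W) * star U := by
      have : Y = V * Matrix.diagonal (fun j => (mu j : ℂ)) * star V := by
        simpa [Function.comp_def] using hYh.spectral_theorem
      rw [this, hV, Matrix.star_mul]
      noncomm_ring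
    have key : X * Y = U * (Matrix.diagonal (fun i => (lam i : ℂ)) *
        (W * Matrix.diagonal (fun j => (mu j : ℂ)) * star W)) * star U := by
      rw [hXs, hYs]
      calc U * Matrix.diagonal (fun i => (lam i : ℂ)) * star U *
            (U * (W * Matrix.diagonal (fun j => (mu j : ℂ)) * star W) * star U)
          = U * Matrix.diagonal (fun i => (lam i : ℂ)) * (star U * U) *
            (W * Matrix.diagonal (fun j => (mu j : ℂ)) * star W) * star U := by
            noncomm_ring
        _ = _ := by rw [hU1]; noncomm_ring
    rw [key, Matrix.trace_mul_cycle, ← Matrix.mul_assoc, hU1, Matrix.one_mul]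
    rw [Matrix.trace]
    push_cast
    refine Finset.sum_congr rfl fun i _ => ?_
    rw [Matrix.diag_apply, Matrix.diagonal_mul, Matrix.mul_apply, Finset.mul_sum]
    refine Finset.sum_congr rfl fun j _ => ?_
    rw [Matrix.mul_diagonal, Matrix.star_apply]
    have hws : W i j * star (W i j) = ((w i j : ℝ) : ℂ) := by
      simp [hw, Complex.mul_conj]
    calc (lam i : ℂ) * (W i j * (mu j : ℂ) * star (W i j))
        = (lam i : ℂ) * (mu j : ℂ) * (W i j * star (W i j)) := by ring
      _ = (lam i : ℂ) * (mu j : ℂ) * ((w i j : ℝ) : ℂ) := by rw [hws]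
  -- traces of powers
  have hXp : (mpow X p).trace = ((∑ i, lam i ^ p : ℝ) : ℂ) := by
    rw [mpow, mfun_trace _ hXh]; push_cast; rfl
  have hYq : (mpow Y q).trace = ((∑ j, mu j ^ q : ℝ) : ℂ) := by
    rw [mpow, mfun_trace _ hYh]; push_cast; rfl
  rw [hXY, hXp, hYq]
  have hreal : (∑ i, ∑ j, lam i * mu j * w i j : ℝ) ≤
      (1 / p) * (∑ i, lam i ^ p) + (1 / q) * (∑ j, mu j ^ q) := by
    have step1 : (∑ i, ∑ j, lam i * mu j * w i j : ℝ) ≤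
        ∑ i, ∑ j, (lam i ^ p / p + mu j ^ q / q) * w i j := by
      refine Finset.sum_le_sum fun i _ => Finset.sum_le_sum fun j _ => ?_
      exact mul_le_mul_of_nonneg_right
        (Real.young_inequality_of_nonneg (hlam0 i) (hmu0 j) hpq') (hw0 i j)
    refine step1.trans_eq ?_
    have expand : (∑ i, ∑ j, (lam i ^ p / p + mu j ^ q / q) * w i j : ℝ) =
        (∑ i, ∑ j, (lam i ^ p / p) * w i j) + (∑ i, ∑ j, (mu j ^ q / q) * w i j) := by
      rw [← Finset.sum_add_distrib]
      refine Finset.sum_congr rfl fun i _ => ?_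
      rw [← Finset.sum_add_distrib]
      exact Finset.sum_congr rfl fun j _ => by ring
    rw [expand]
    congr 1
    · rw [Finset.mul_sum]
      refine Finset.sum_congr rfl fun i _ => ?_
      rw [← Finset.mul_sum, hrow i]
      ring
    · rw [Finset.sum_comm, Finset.mul_sum]
      refine Finset.sum_congr rfl fun j _ => ?_
      rw [← Finset.mul_sum, hcol j]
      ring
  calc ((∑ i, ∑ j, lam i * mu j * w i j : ℝ) : ℂ)
      ≤ (((1 / p) * (∑ i, lam i ^ p) + (1 / q) * (∑ j, mu j ^ q) : ℝ) : ℂ) :=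
        Complex.real_le_real.mpr hreal
    _ = _ := by push_cast; ring
end

section
/- For positive semidefinite matrices X and Y with p, q > 1, 1/p + 1/q = 1, if X^p = Y^q then tr(XY) = (1/p) tr(X^p) + (1/q) tr(Y^q). -/
open Matrix ComplexOrder

lemma mfun_eq_cfc {m : Type*} [Fintype m] [DecidableEq m] (f : ℝ → ℝ)
    (A : Matrix m m ℂ) (hA : A.IsHermitian) : mfun f A = cfc f A := by
  rw [mfun, dif_pos hA, hA.cfc_eq]
  rfl

lemma rpow_continuousOn (r : ℝ) (hr : 0 < r) (s : Set ℝ) :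
    ContinuousOn (fun x : ℝ => x ^ r) s :=
  fun x _ => (Real.continuousAt_rpow_const x r (Or.inr hr.le)).continuousWithinAt

theorem young_trace_equality {n : ℕ} (X Y : Matrix (Fin n) (Fin n) ℂ)
    (hX : X.PosSemidef) (hY : Y.PosSemidef) (p q : ℝ) (hp : 1 < p) (hq : 1 < q)
    (hpq : 1 / p + 1 / q = 1) (heq : mpow X p = mpow Y q) :
    (X * Y).trace = (1 / p : ℂ) * (mpow X p).trace + (1 / q : ℂ) * (mpow Y q).trace := by
  have hp0 : (0:ℝ) < p := by linarith
  have hq0 : (0:ℝ) < q := by linarith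
  have hp1 : (0:ℝ) < p - 1 := by linarith
  have hXh : X.IsHermitian := hX.1
  have hYh : Y.IsHermitian := hY.1
  have hXsa : IsSelfAdjoint X := hXh
  have hYsa : IsSelfAdjoint Y := hYh
  have hXs : ∀ x ∈ spectrum ℝ X, 0 ≤ x := by
    intro x hx
    rw [Matrix.IsHermitian.spectrum_real_eq_range_eigenvalues hXh] at hx
    obtain ⟨i, rfl⟩ := hx
    exact hX.eigenvalues_nonneg i
  have hYs : ∀ x ∈ spectrum ℝ Y, 0 ≤ x := by
    intro x hx
    rw [Matrix.IsHermitian.spectrum_real_eq_range_eigenvalues hYh] at hx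
    obtain ⟨i, rfl⟩ := hx
    exact hY.eigenvalues_nonneg i
  have hXcfc : mpow X p = cfc (fun x : ℝ => x ^ p) X := mfun_eq_cfc _ _ hXh
  have hYcfc : mpow Y q = cfc (fun x : ℝ => x ^ q) Y := mfun_eq_cfc _ _ hYh
  have hpq' : p * (1/q) = p - 1 := by
    have h1q : 1/q = 1 - 1/p := by linarith
    rw [h1q, mul_sub, mul_one, mul_one_div, div_self hp0.ne']
  -- Y = cfc (x ^ (p-1)) X
  have hY1 : Y = cfc (fun x : ℝ => x ^ (p - 1)) X := by
    have h2 : cfc (fun x : ℝ => x ^ (1/q)) (cfc (fun x : ℝ => x ^ q) Y) = Y := by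
      rw [← cfc_comp (fun x : ℝ => x ^ (1/q)) (fun x : ℝ => x ^ q) Y hYsa
        (rpow_continuousOn _ (by positivity) _) (rpow_continuousOn _ hq0 _)]
      calc cfc ((fun x : ℝ => x ^ (1/q)) ∘ (fun x : ℝ => x ^ q)) Y
          = cfc (id : ℝ → ℝ) Y := by
            apply cfc_congr
            intro x hx
            have hx0 : 0 ≤ x := hYs x hx
            simp only [Function.comp, id]
            rw [← Real.rpow_mul hx0, mul_one_div, div_self hq0.ne', Real.rpow_one]
        _ = Y := cfc_id ℝ Y
    rw [← hYcfc, ← heq, hXcfc] at h2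
    rw [← h2, ← cfc_comp (fun x : ℝ => x ^ (1/q)) (fun x : ℝ => x ^ p) X hXsa
      (rpow_continuousOn _ (by positivity) _) (rpow_continuousOn _ hp0 _)]
    apply cfc_congr
    intro x hx
    have hx0 : 0 ≤ x := hXs x hx
    simp only [Function.comp]
    rw [← Real.rpow_mul hx0, hpq']
  -- X * Y = mpow X p
  have hXY : X * Y = mpow X p := by
    rw [hXcfc, hY1]
    nth_rewrite 1 [← cfc_id ℝ X hXsa]
    rw [← cfc_mul _ _ X continuousOn_id (rpow_continuousOn _ hp1 _)]
    apply cfc_congr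
    intro x hx
    have hx0 : 0 ≤ x := hXs x hx
    simp only [id]
    rcases eq_or_lt_of_le hx0 with h | h
    · rw [← h, Real.zero_rpow hp0.ne', Real.zero_rpow hp1.ne', mul_zero]
    · nth_rewrite 1 [← Real.rpow_one x]
      rw [← Real.rpow_add h]
      ring_nf
  rw [hXY, ← heq]
  have : ((1:ℂ)/p + 1/q) = 1 := by
    rw [show ((1:ℂ)/p + 1/q) = ((1/p + 1/q : ℝ) : ℂ) by push_cast; ring, hpq]
    norm_num
  calc (mpow X p).trace = ((1:ℂ)/p + 1/q) * (mpow X p).trace := by rw [this, one_mul]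
    _ = (1/p : ℂ) * (mpow X p).trace + (1/q : ℂ) * (mpow X p).trace := by ring
end

section
/- Let ρ, σ be positive definite n×n matrices and α > 1, and set β = (α−1)/(2α). Then tr((σ^{−β} ρ σ^{−β})^α) equals the supremum over positive semidefinite matrices H of α·tr(Hρ) − (α−1)·tr((H^{1/2} σ^{2β} H^{1/2})^{α/(α−1)}). -/
open Matrix ComplexOrder

set_option linter.unusedSectionVars false

namespace VarSup

open Polynomial

variable {m : Type*} [Fintype m] [DecidableEq m] {A : Matrix m m ℂ}

/-! ### Characteristic polynomial tools -/

lemma myEvalCharpoly (M : Matrix m m ℂ) (x : ℂ) :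
    M.charpoly.eval x = (x • (1 : Matrix m m ℂ) - M).det := by
  rw [Matrix.charpoly, ← Polynomial.coe_evalRingHom, RingHom.map_det]
  congr 1
  ext i j
  rcases eq_or_ne i j with rfl | h
  · simp [Matrix.charmatrix_apply_eq, Matrix.one_apply]
  · simp [Matrix.charmatrix_apply_ne _ _ _ h, Matrix.one_apply, h]

lemma myCharpolyMulComm (A B : Matrix m m ℂ) : (A * B).charpoly = (B * A).charpoly := by
  apply Polynomial.funext
  intro x
  rw [myEvalCharpoly, myEvalCharpoly]
  rcases eq_or_ne x 0 with rfl | hx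
  · simp only [zero_smul, zero_sub, Matrix.det_neg, Matrix.det_mul]
    ring
  · have key : ∀ C D : Matrix m m ℂ, x • (1 : Matrix m m ℂ) - C * D
        = x • ((1 : Matrix m m ℂ) - (x⁻¹ • C) * D) := by
      intro C D
      rw [Matrix.smul_mul, smul_sub, smul_smul, mul_inv_cancel₀ hx, one_smul]
    rw [key A B, key B A, Matrix.det_smul, Matrix.det_smul, Matrix.det_one_sub_mul_comm,
      Matrix.mul_smul, ← Matrix.smul_mul]

lemma myCharpolyDiagonal (v : m → ℂ) :
    (Matrix.diagonal v).charpoly = ∏ i, (X - C (v i)) := by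
  have h : charmatrix (Matrix.diagonal v) = Matrix.diagonal (fun i => (X : ℂ[X]) - C (v i)) := by
    ext i j
    rcases eq_or_ne i j with rfl | h
    · simp
    · simp [Matrix.charmatrix_apply_ne _ _ _ h, Matrix.diagonal_apply_ne _ h]
  rw [Matrix.charpoly, h, Matrix.det_diagonal]

lemma myCharpolyUnitaryDiag (V : Matrix m m ℂ) (hV : star V * V = 1) (d : m → ℂ) :
    (V * Matrix.diagonal d * star V).charpoly = ∏ i, (X - C (d i)) := by
  rw [myCharpolyMulComm (V * Matrix.diagonal d) (star V), ← mul_assoc, hV, one_mul,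
    myCharpolyDiagonal]

lemma myMultisetOfProd (d e : m → ℝ)
    (h : (∏ i, (X - C ((d i : ℂ)))) = ∏ i, (X - C ((e i : ℂ)))) (f : ℝ → ℝ) :
    ∑ i, f (d i) = ∑ i, f (e i) := by
  have hd : ∀ c : m → ℂ, (∏ i, (X - C (c i)))
      = (Multiset.map (fun a => X - C a) (Finset.univ.val.map c)).prod := by
    intro c; rw [Multiset.map_map]; rfl
  rw [hd, hd] at h
  have h2 := congrArg Polynomial.roots h
  rw [roots_multiset_prod_X_sub_C, roots_multiset_prod_X_sub_C] at h2
  have h3 := congrArg (fun s : Multiset ℂ => (s.map (fun z => f z.re)).sum) h2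
  simp only [Multiset.map_map, Function.comp] at h3
  simp only [Complex.ofReal_re] at h3
  exact h3

/-! ### Basic facts about `mfun` -/

lemma mfun_eq (hA : A.IsHermitian) (f : ℝ → ℝ) :
    mfun f A = (hA.eigenvectorUnitary : Matrix m m ℂ) *
      Matrix.diagonal (fun i => (f (hA.eigenvalues i) : ℂ)) *
      (star (hA.eigenvectorUnitary : Matrix m m ℂ)) := dif_pos hA

lemma star_mul_self_eigU (hA : A.IsHermitian) :
    star (hA.eigenvectorUnitary : Matrix m m ℂ) * (hA.eigenvectorUnitary : Matrix m m ℂ) = 1 :=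
  Unitary.coe_star_mul_self hA.eigenvectorUnitary

lemma mul_star_self_eigU (hA : A.IsHermitian) :
    (hA.eigenvectorUnitary : Matrix m m ℂ) * star (hA.eigenvectorUnitary : Matrix m m ℂ) = 1 :=
  Unitary.coe_mul_star_self hA.eigenvectorUnitary

lemma spectral (hA : A.IsHermitian) :
    A = (hA.eigenvectorUnitary : Matrix m m ℂ) *
      Matrix.diagonal (fun i => ((hA.eigenvalues i : ℝ) : ℂ)) *
      (star (hA.eigenvectorUnitary : Matrix m m ℂ)) := hA.spectral_theorem

lemma mfun_mul_mfun (hA : A.IsHermitian) (f g : ℝ → ℝ) :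
    mfun f A * mfun g A = mfun (fun x => f x * g x) A := by
  rw [mfun_eq hA f, mfun_eq hA g, mfun_eq hA]
  calc ((hA.eigenvectorUnitary : Matrix m m ℂ) *
      Matrix.diagonal (fun i => (f (hA.eigenvalues i) : ℂ)) *
      (star (hA.eigenvectorUnitary : Matrix m m ℂ))) *
      ((hA.eigenvectorUnitary : Matrix m m ℂ) *
      Matrix.diagonal (fun i => (g (hA.eigenvalues i) : ℂ)) *
      (star (hA.eigenvectorUnitary : Matrix m m ℂ)))
      = (hA.eigenvectorUnitary : Matrix m m ℂ) *
      (Matrix.diagonal (fun i => (f (hA.eigenvalues i) : ℂ)) *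
      ((star (hA.eigenvectorUnitary : Matrix m m ℂ)) * (hA.eigenvectorUnitary : Matrix m m ℂ)) *
      Matrix.diagonal (fun i => (g (hA.eigenvalues i) : ℂ))) *
      (star (hA.eigenvectorUnitary : Matrix m m ℂ)) := by
        simp only [mul_assoc]
    _ = _ := by
        rw [star_mul_self_eigU hA, mul_one, Matrix.diagonal_mul_diagonal]
        push_cast
        rfl

lemma mfun_congr (hA : A.IsHermitian) {f g : ℝ → ℝ}
    (h : ∀ i, f (hA.eigenvalues i) = g (hA.eigenvalues i)) : mfun f A = mfun g A := by
  rw [mfun_eq hA, mfun_eq hA]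
  congr 1
  congr 1
  ext i j
  simp [Matrix.diagonal, h i]

lemma mfun_id (hA : A.IsHermitian) : mfun (fun x => x) A = A := by
  rw [mfun_eq hA]; exact (spectral hA).symm

lemma mfun_one' (hA : A.IsHermitian) {f : ℝ → ℝ} (h : ∀ i, f (hA.eigenvalues i) = 1) :
    mfun f A = 1 := by
  rw [mfun_eq hA]
  have : Matrix.diagonal (fun i => (f (hA.eigenvalues i) : ℂ)) = 1 := by
    ext i j
    rcases eq_or_ne i j with rfl | hij
    · simp [h i]
    · simp [Matrix.diagonal_apply_ne _ hij, Matrix.one_apply_ne hij]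
  rw [this, mul_one, mul_star_self_eigU hA]

lemma diag_isHermitian (hA : A.IsHermitian) (f : ℝ → ℝ) :
    (Matrix.diagonal (fun i => (f (hA.eigenvalues i) : ℂ))).IsHermitian := by
  ext i j
  rcases eq_or_ne i j with rfl | hij
  · simp [Matrix.conjTranspose_apply]
  · simp [Matrix.conjTranspose_apply, Matrix.diagonal_apply_ne _ hij,
      Matrix.diagonal_apply_ne _ (Ne.symm hij)]

lemma mfun_isHermitian (hA : A.IsHermitian) (f : ℝ → ℝ) : (mfun f A).IsHermitian := by
  rw [mfun_eq hA, Matrix.star_eq_conjTranspose]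
  exact Matrix.isHermitian_mul_mul_conjTranspose _ (diag_isHermitian hA f)

lemma mfun_posSemidef (hA : A.IsHermitian) {f : ℝ → ℝ}
    (h : ∀ i, 0 ≤ f (hA.eigenvalues i)) : (mfun f A).PosSemidef := by
  rw [mfun_eq hA]
  have hd : (Matrix.diagonal (fun i => (f (hA.eigenvalues i) : ℂ))).PosSemidef := by
    apply Matrix.posSemidef_diagonal_iff.mpr
    intro i
    rw [← Complex.ofReal_zero]
    exact_mod_cast Complex.real_le_real.mpr (h i)
  rw [Matrix.star_eq_conjTranspose]
  exact hd.mul_mul_conjTranspose_same _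

lemma trace_mfun (hA : A.IsHermitian) (f : ℝ → ℝ) :
    (mfun f A).trace = ((∑ i, f (hA.eigenvalues i) : ℝ) : ℂ) := by
  rw [mfun_eq hA, Matrix.trace_mul_cycle, star_mul_self_eigU hA, one_mul,
    Matrix.trace_diagonal]
  push_cast; rfl

lemma charpoly_mfun (hA : A.IsHermitian) (f : ℝ → ℝ) :
    (mfun f A).charpoly = ∏ i, (X - C ((f (hA.eigenvalues i) : ℂ))) := by
  rw [mfun_eq hA]
  exact myCharpolyUnitaryDiag _ (star_mul_self_eigU hA) _

lemma charpoly_eigs (hA : A.IsHermitian) :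
    A.charpoly = ∏ i, (X - C ((hA.eigenvalues i : ℂ))) := by
  conv_lhs => rw [spectral hA]
  exact myCharpolyUnitaryDiag _ (star_mul_self_eigU hA) _

lemma sum_f_eig_eq_of_charpoly {M N : Matrix m m ℂ} (hM : M.IsHermitian) (hN : N.IsHermitian)
    (h : M.charpoly = N.charpoly) (f : ℝ → ℝ) :
    ∑ i, f (hM.eigenvalues i) = ∑ i, f (hN.eigenvalues i) :=
  myMultisetOfProd _ _ (by rw [← charpoly_eigs hM, ← charpoly_eigs hN, h]) f

lemma sum_f_eig_mfun (hA : A.IsHermitian) (g f : ℝ → ℝ) :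
    ∑ i, f ((mfun_isHermitian hA g).eigenvalues i) = ∑ i, f (g (hA.eigenvalues i)) :=
  myMultisetOfProd _ _ (by rw [← charpoly_eigs (mfun_isHermitian hA g), charpoly_mfun hA g]) f

/-! ### Young's trace inequality -/

lemma diag_conj_entry (l mu : m → ℝ) (W : Matrix m m ℂ) (i : m) :
    ((Matrix.diagonal fun i => (l i : ℂ)) *
      (W * ((Matrix.diagonal fun j => (mu j : ℂ)) * star W))) i i
      = ((∑ j, l i * mu j * Complex.normSq (W i j) : ℝ) : ℂ) := by
  rw [Matrix.diagonal_mul, Matrix.mul_apply]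
  push_cast
  rw [Finset.mul_sum]
  congr 1
  funext j
  rw [Matrix.diagonal_mul, Matrix.star_apply, Complex.star_def,
    show ((l i : ℂ)) * (W i j * ((mu j : ℂ) * (starRingEnd ℂ) (W i j)))
      = (l i : ℂ) * (mu j : ℂ) * (W i j * (starRingEnd ℂ) (W i j)) from by ring,
    Complex.mul_conj]

lemma row_sums (W : Matrix m m ℂ) (hW : W * star W = 1) (i : m) :
    ∑ j, Complex.normSq (W i j) = 1 := by
  have h := congrFun (congrFun hW i) i
  rw [Matrix.mul_apply, Matrix.one_apply_eq] at h
  have : (((∑ j, Complex.normSq (W i j) : ℝ)) : ℂ) = 1 := by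
    rw [← h]
    push_cast
    congr 1; funext j
    rw [Matrix.star_apply, Complex.star_def, Complex.mul_conj]
  exact_mod_cast this

lemma trace_mul_young {K A : Matrix m m ℂ} (hK : K.PosSemidef) (hA : A.PosSemidef)
    {p q : ℝ} (hpq : p.HolderConjugate q) :
    (K * A).trace.re ≤ (∑ i, hK.1.eigenvalues i ^ p) / p + (∑ i, hA.1.eigenvalues i ^ q) / q := by
  set U := (hK.1.eigenvectorUnitary : Matrix m m ℂ) with hU
  set V := (hA.1.eigenvectorUnitary : Matrix m m ℂ) with hV
  set lam := hK.1.eigenvalues with hlam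
  set mu := hA.1.eigenvalues with hmu
  have hWW : (star U * V) * star (star U * V) = 1 := by
    rw [Matrix.star_mul, star_star]
    have h2 : star U * V * (star V * U) = star U * (V * star V) * U := by
      simp only [mul_assoc]
    rw [h2, mul_star_self_eigU hA.1, mul_one, star_mul_self_eigU hK.1]
  have hW'W : star (star U * V) * (star U * V) = 1 := by
    rw [Matrix.star_mul, star_star]
    have h2 : star V * U * (star U * V) = star V * (U * star U) * V := by
      simp only [mul_assoc]
    rw [h2, mul_star_self_eigU hK.1, mul_one, star_mul_self_eigU hA.1]
  have htr : (K * A).trace = ((Matrix.diagonal fun i => (lam i : ℂ)) * ((star U * V) *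
      ((Matrix.diagonal fun j => (mu j : ℂ)) * star (star U * V)))).trace := by
    conv_lhs => rw [spectral hK.1, spectral hA.1]
    rw [show (U * (Matrix.diagonal fun i => (lam i : ℂ)) * star U) *
        (V * (Matrix.diagonal fun j => (mu j : ℂ)) * star V)
        = U * ((Matrix.diagonal fun i => (lam i : ℂ)) * (star U * (V *
          ((Matrix.diagonal fun j => (mu j : ℂ)) * star V)))) by simp only [mul_assoc]]
    rw [Matrix.trace_mul_comm, Matrix.star_mul, star_star]
    congr 1
    simp only [mul_assoc]
  have hre : (K * A).trace.re = ∑ i, ∑ j, lam i * mu j * Complex.normSq ((star U * V) i j) := by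
    rw [htr, Matrix.trace]
    rw [show ∀ M : Matrix m m ℂ, (∑ i, M.diag i).re = ∑ i, (M.diag i).re from
      fun M => by rw [Complex.re_sum]]
    congr 1
    funext i
    rw [Matrix.diag_apply, diag_conj_entry, Complex.ofReal_re]
  rw [hre]
  have hnn : ∀ i j : m, 0 ≤ Complex.normSq ((star U * V) i j) := fun i j => Complex.normSq_nonneg _
  calc ∑ i, ∑ j, lam i * mu j * Complex.normSq ((star U * V) i j)
      ≤ ∑ i, ∑ j, (lam i ^ p / p + mu j ^ q / q) * Complex.normSq ((star U * V) i j) := by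
        apply Finset.sum_le_sum; intro i _
        apply Finset.sum_le_sum; intro j _
        exact mul_le_mul_of_nonneg_right
          (Real.young_inequality_of_nonneg (hK.eigenvalues_nonneg i) (hA.eigenvalues_nonneg j) hpq)
          (hnn i j)
    _ = (∑ i, lam i ^ p) / p + (∑ j, mu j ^ q) / q := by
        simp only [add_mul, Finset.sum_add_distrib]
        congr 1
        · rw [Finset.sum_div]
          congr 1; funext i
          rw [← Finset.mul_sum, row_sums _ hWW i, mul_one]
        · rw [Finset.sum_comm, Finset.sum_div]
          congr 1; funext j
          rw [← Finset.mul_sum]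
          have : ∑ i, Complex.normSq ((star U * V) i j) = 1 := by
            have := row_sums (star (star U * V)) (by rw [star_star]; exact hW'W) j
            simp only [Matrix.star_apply, Complex.star_def, Complex.normSq_conj] at this
            exact this
          rw [this, mul_one]

/-! ### Step B : swapping `H^{1/2} σ^{2β} H^{1/2}` for `σ^β H σ^β` inside a trace -/

lemma stepB {σ H : Matrix m m ℂ} (hσ : σ.IsHermitian) (hH : H.PosSemidef) (β r : ℝ)
    (hS2 : mpow σ β * mpow σ β = mpow σ (2*β)) :
    (mpow (mpow H (1/2) * mpow σ (2*β) * mpow H (1/2)) r).trace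
      = (mpow (mpow σ β * H * mpow σ β) r).trace := by
  have hDh : (mpow H (1/2)).IsHermitian := mfun_isHermitian hH.1 _
  have hSh : (mpow σ β).IsHermitian := mfun_isHermitian hσ _
  have hDD : mpow H (1/2) * mpow H (1/2) = H := by
    rw [mpow, mfun_mul_mfun hH.1]
    rw [mfun_congr hH.1 (g := fun x => x) ?_, mfun_id hH.1]
    intro i
    rw [← Real.rpow_add' (hH.eigenvalues_nonneg i) (by norm_num)]
    norm_num
  have hB1 : mpow H (1/2) * mpow σ (2*β) * mpow H (1/2)
      = (mpow σ β * mpow H (1/2))ᴴ * (mpow σ β * mpow H (1/2)) := by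
    rw [Matrix.conjTranspose_mul, hDh.eq, hSh.eq, ← hS2]
    simp only [mul_assoc]
  have hB2 : mpow σ β * H * mpow σ β
      = (mpow σ β * mpow H (1/2)) * (mpow σ β * mpow H (1/2))ᴴ := by
    rw [Matrix.conjTranspose_mul, hDh.eq, hSh.eq]
    conv_lhs => rw [← hDD]
    simp only [mul_assoc]
  have hM1 : (mpow H (1/2) * mpow σ (2*β) * mpow H (1/2)).PosSemidef := by
    rw [hB1]; exact Matrix.posSemidef_conjTranspose_mul_self _
  have hM2 : (mpow σ β * H * mpow σ β).PosSemidef := by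
    rw [hB2]; exact Matrix.posSemidef_self_mul_conjTranspose _
  have hch : (mpow H (1/2) * mpow σ (2*β) * mpow H (1/2)).charpoly
      = (mpow σ β * H * mpow σ β).charpoly := by
    rw [hB1, hB2, myCharpolyMulComm]
  rw [show mpow (mpow H (1/2) * mpow σ (2*β) * mpow H (1/2)) r
      = mfun (fun x => x ^ r) (mpow H (1/2) * mpow σ (2*β) * mpow H (1/2)) from rfl,
    show mpow (mpow σ β * H * mpow σ β) r = mfun (fun x => x ^ r) (mpow σ β * H * mpow σ β) from rfl,
    trace_mfun hM1.1, trace_mfun hM2.1]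
  exact_mod_cast congrArg Complex.ofReal (sum_f_eig_eq_of_charpoly hM1.1 hM2.1 hch (fun x => x ^ r))



/-! ### Assembly lemmas -/

lemma key_stepA {σ ρ H : Matrix m m ℂ} {β : ℝ}
    (hSS' : mpow σ β * mpow σ (-β) = 1) (hS'S : mpow σ (-β) * mpow σ β = 1) :
    (H * ρ).trace
      = ((mpow σ β * H * mpow σ β) * (mpow σ (-β) * ρ * mpow σ (-β))).trace := by
  have h1 : (mpow σ β * H * mpow σ β) * (mpow σ (-β) * ρ * mpow σ (-β))
      = mpow σ β * (H * ρ) * mpow σ (-β) := by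
    rw [show (mpow σ β * H * mpow σ β) * (mpow σ (-β) * ρ * mpow σ (-β))
        = mpow σ β * (H * ((mpow σ β * mpow σ (-β)) * (ρ * mpow σ (-β))))
        from by simp only [mul_assoc], hSS']
    simp only [one_mul, mul_assoc]
  rw [h1, Matrix.trace_mul_cycle, hS'S, one_mul]

lemma key_upper {σ ρ A H : Matrix m m ℂ} (hσ : σ.IsHermitian) (hH : H.PosSemidef)
    (hA : A.PosSemidef) {α q β : ℝ} (hα0 : 0 < α) (hq0 : q ≠ 0)
    (hcc : α.HolderConjugate q) (hαq : α / q = α - 1)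
    (hS2 : mpow σ β * mpow σ β = mpow σ (2*β))
    (htrace : (H * ρ).trace = ((mpow σ β * H * mpow σ β) * A).trace) :
    α * (H * ρ).trace.re -
      (α - 1) * (mpow (mpow H (1/2) * mpow σ (2*β) * mpow H (1/2)) q).trace.re
      ≤ ∑ i, hA.1.eigenvalues i ^ α := by
  have hSh : (mpow σ β).IsHermitian := mfun_isHermitian hσ _
  have hK : (mpow σ β * H * mpow σ β).PosSemidef := by
    have h := hH.conjTranspose_mul_mul_same (mpow σ β)
    rwa [hSh.eq] at h
  have htr2 : (mpow (mpow H (1/2) * mpow σ (2*β) * mpow H (1/2)) q).trace.re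
      = ∑ i, hK.1.eigenvalues i ^ q := by
    rw [stepB hσ hH β q hS2,
      show mpow (mpow σ β * H * mpow σ β) q
        = mfun (fun x => x ^ q) (mpow σ β * H * mpow σ β) from rfl,
      trace_mfun hK.1, Complex.ofReal_re]
  have hyoung : ((mpow σ β * H * mpow σ β) * A).trace.re
      ≤ (∑ i, hK.1.eigenvalues i ^ q) / q + (∑ i, hA.1.eigenvalues i ^ α) / α :=
    trace_mul_young hK hA hcc.symm
  rw [htrace, htr2]
  have h2 : α * ((∑ i, hK.1.eigenvalues i ^ q) / q + (∑ i, hA.1.eigenvalues i ^ α) / α)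
      = (α - 1) * (∑ i, hK.1.eigenvalues i ^ q) + ∑ i, hA.1.eigenvalues i ^ α := by
    generalize (∑ i, hK.1.eigenvalues i ^ q) = s
    generalize (∑ i, hA.1.eigenvalues i ^ α) = t
    rw [mul_add, show α * (s / q) = (α / q) * s from by ring, hαq,
      show α * (t / α) = t from by field_simp]
  have h3 := mul_le_mul_of_nonneg_left hyoung hα0.le
  linarith [h3, h2]

lemma key_mem {σ ρ A : Matrix m m ℂ} (hσ : σ.IsHermitian) (hρ : ρ.PosDef)
    (hA : A.PosSemidef) {β : ℝ}
    (hAdef : A = mpow σ (-β) * ρ * mpow σ (-β))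
    (hSS' : mpow σ β * mpow σ (-β) = 1) (hS'S : mpow σ (-β) * mpow σ β = 1)
    (hS2 : mpow σ β * mpow σ β = mpow σ (2*β))
    {α q : ℝ} (hα0 : 0 < α) (hq : (α - 1) * q = α) :
    ∃ H₀ : Matrix m m ℂ, H₀.PosSemidef ∧
      (H₀ * ρ).trace.re = ∑ i, hA.1.eigenvalues i ^ α ∧
      (mpow (mpow H₀ (1/2) * mpow σ (2*β) * mpow H₀ (1/2)) q).trace.re
        = ∑ i, hA.1.eigenvalues i ^ α := by
  have hμ : ∀ i, 0 ≤ hA.1.eigenvalues i := hA.eigenvalues_nonneg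
  have hS'h : (mpow σ (-β)).IsHermitian := mfun_isHermitian hσ _
  have hG : (mfun (fun x => x ^ (α - 1)) A).PosSemidef :=
    mfun_posSemidef hA.1 (fun i => Real.rpow_nonneg (hμ i) _)
  refine ⟨mpow σ (-β) * mfun (fun x => x ^ (α - 1)) A * mpow σ (-β), ?_, ?_, ?_⟩
  · have h := hG.conjTranspose_mul_mul_same (mpow σ (-β))
    rwa [hS'h.eq] at h
  · rw [key_stepA hSS' hS'S, ← hAdef]
    have hcol : mpow σ β * (mpow σ (-β) * mfun (fun x => x ^ (α - 1)) A * mpow σ (-β)) *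
        mpow σ β = mfun (fun x => x ^ (α - 1)) A := by
      rw [show mpow σ β * (mpow σ (-β) * mfun (fun x => x ^ (α - 1)) A * mpow σ (-β)) *
          mpow σ β = (mpow σ β * mpow σ (-β)) *
            (mfun (fun x => x ^ (α - 1)) A * (mpow σ (-β) * mpow σ β))
          from by simp only [mul_assoc], hSS', hS'S, one_mul, mul_one]
    rw [hcol]
    have hGA : mfun (fun x => x ^ (α - 1)) A * A = mfun (fun x => x ^ α) A := by
      nth_rewrite 2 [show A = mfun (fun x => x) A from (mfun_id hA.1).symm]
      rw [mfun_mul_mfun hA.1]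
      apply mfun_congr hA.1
      intro i
      have h := Real.rpow_add' (hμ i) (show (α - 1) + 1 ≠ 0 by
        rw [sub_add_cancel]; exact hα0.ne')
      rw [Real.rpow_one] at h
      rw [← h, show α - 1 + 1 = α from by ring]
    rw [hGA, trace_mfun hA.1, Complex.ofReal_re]
  · have hH₀ : (mpow σ (-β) * mfun (fun x => x ^ (α - 1)) A * mpow σ (-β)).PosSemidef := by
      have h := hG.conjTranspose_mul_mul_same (mpow σ (-β))
      rwa [hS'h.eq] at h
    rw [stepB hσ hH₀ β q hS2]
    have hcol : mpow σ β * (mpow σ (-β) * mfun (fun x => x ^ (α - 1)) A * mpow σ (-β)) *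
        mpow σ β = mfun (fun x => x ^ (α - 1)) A := by
      rw [show mpow σ β * (mpow σ (-β) * mfun (fun x => x ^ (α - 1)) A * mpow σ (-β)) *
          mpow σ β = (mpow σ β * mpow σ (-β)) *
            (mfun (fun x => x ^ (α - 1)) A * (mpow σ (-β) * mpow σ β))
          from by simp only [mul_assoc], hSS', hS'S, one_mul, mul_one]
    rw [hcol,
      show mpow (mfun (fun x => x ^ (α - 1)) A) q
        = mfun (fun x => x ^ q) (mfun (fun x => x ^ (α - 1)) A) from rfl,
      trace_mfun (mfun_isHermitian hA.1 (fun x => x ^ (α - 1))), Complex.ofReal_re,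
      sum_f_eig_mfun hA.1 (fun x => x ^ (α - 1)) (fun x => x ^ q)]
    apply Finset.sum_congr rfl
    intro i _
    rw [← Real.rpow_mul (hμ i) (α - 1) q, hq]

end VarSup

theorem variational_formula_sup {n : ℕ} (ρ σ : Matrix (Fin n) (Fin n) ℂ)
    (hρ : ρ.PosDef) (hσ : σ.PosDef) (α : ℝ) (hα : 1 < α) (β : ℝ) (hβ : β = (α - 1) / (2 * α)) :
    IsLUB {x : ℝ | ∃ H : Matrix (Fin n) (Fin n) ℂ, H.PosSemidef ∧
        x = α * (H * ρ).trace.re -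
          (α - 1) * (mpow (mpow H (1/2) * mpow σ (2 * β) * mpow H (1/2)) (α / (α - 1))).trace.re}
      ((mpow (mpow σ (-β) * ρ * mpow σ (-β)) α).trace.re) := by
  classical
  have hα0 : (0:ℝ) < α := lt_trans zero_lt_one hα
  have hα1 : (0:ℝ) < α - 1 := sub_pos.mpr hα
  have hq0 : (0:ℝ) < α / (α - 1) := div_pos hα0 hα1
  have hcc : α.HolderConjugate (α / (α - 1)) :=
    (Real.holderConjugate_iff_eq_conjExponent hα).mpr rfl
  have hαq : α / (α / (α - 1)) = α - 1 := by
    rw [div_div_eq_mul_div, mul_comm α (α - 1), mul_div_assoc, div_self hα0.ne', mul_one]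
  have hq : (α - 1) * (α / (α - 1)) = α := by
    rw [mul_div_assoc', mul_comm, mul_div_assoc, div_self hα1.ne', mul_one]
  have hσe : ∀ i, 0 < hσ.1.eigenvalues i := hσ.eigenvalues_pos
  have hSS' : mpow σ β * mpow σ (-β) = 1 := by
    simp only [mpow]
    rw [VarSup.mfun_mul_mfun hσ.1]
    apply VarSup.mfun_one' hσ.1
    intro i
    rw [← Real.rpow_add (hσe i), add_neg_cancel, Real.rpow_zero]
  have hS'S : mpow σ (-β) * mpow σ β = 1 := by
    simp only [mpow]
    rw [VarSup.mfun_mul_mfun hσ.1]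
    apply VarSup.mfun_one' hσ.1
    intro i
    rw [← Real.rpow_add (hσe i), neg_add_cancel, Real.rpow_zero]
  have hS2 : mpow σ β * mpow σ β = mpow σ (2 * β) := by
    simp only [mpow]
    rw [VarSup.mfun_mul_mfun hσ.1]
    apply VarSup.mfun_congr hσ.1
    intro i
    rw [← Real.rpow_add (hσe i), two_mul]
  have hS'h : (mpow σ (-β)).IsHermitian := VarSup.mfun_isHermitian hσ.1 _
  have hApsd : (mpow σ (-β) * ρ * mpow σ (-β)).PosSemidef := by
    have h := hρ.posSemidef.conjTranspose_mul_mul_same (mpow σ (-β))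
    rwa [hS'h.eq] at h
  have hT : (mpow (mpow σ (-β) * ρ * mpow σ (-β)) α).trace.re
      = ∑ i, hApsd.1.eigenvalues i ^ α := by
    rw [show mpow (mpow σ (-β) * ρ * mpow σ (-β)) α
        = mfun (fun x => x ^ α) (mpow σ (-β) * ρ * mpow σ (-β)) from rfl,
      VarSup.trace_mfun hApsd.1, Complex.ofReal_re]
  obtain ⟨H₀, hH₀, hm1, hm2⟩ := VarSup.key_mem hσ.1 hρ hApsd rfl hSS' hS'S hS2 hα0 hq
  constructor
  · rintro x ⟨H, hH, rfl⟩
    rw [hT]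
    exact VarSup.key_upper hσ.1 hH hApsd hα0 hq0.ne' hcc hαq hS2
      (VarSup.key_stepA hSS' hS'S)
  · intro b hb
    exact hb ⟨H₀, hH₀, by rw [hT, hm1, hm2]; ring⟩
end

section
/- Let ρ, σ be positive definite n×n matrices and 0 < α < 1, and set β = (α−1)/(2α). Then tr((σ^{−β} ρ σ^{−β})^α) equals the infimum over positive definite matrices H of α·tr(Hρ) − (α−1)·tr((H^{1/2} σ^{2β} H^{1/2})^{α/(α−1)}). -/
open Matrix ComplexOrder

open Polynomial


variable {m : Type*} [Fintype m] [DecidableEq m]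

lemma posDef_conj {M N : Matrix m m ℂ} (hM : M.PosDef) (hN : IsUnit N) :
    (N * M * Nᴴ).PosDef := by
  refine Matrix.PosDef.of_dotProduct_mulVec_pos ?_ (fun x hx => ?_)
  · have := hM.isHermitian
    unfold Matrix.IsHermitian at *
    simp [conjTranspose_mul, this, Matrix.mul_assoc]
  · have hx' : Nᴴ *ᵥ x ≠ 0 := by
      intro h
      apply hx
      have : Function.Injective (Nᴴ.mulVec) := by
        rw [Matrix.mulVec_injective_iff_isUnit]
        exact (Matrix.isUnit_conjTranspose _).mpr hN
      have := this (a₁ := x) (a₂ := 0) ?_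
      · exact this
      · simpa using h
    have key : star x ⬝ᵥ (N * M * Nᴴ) *ᵥ x = star (Nᴴ *ᵥ x) ⬝ᵥ M *ᵥ (Nᴴ *ᵥ x) := by
      rw [star_mulVec, ← Matrix.mulVec_mulVec, ← Matrix.mulVec_mulVec]
      rw [Matrix.dotProduct_mulVec _ N, conjTranspose_conjTranspose]
    rw [key]
    exact hM.dotProduct_mulVec_pos hx'

lemma aeval_conj (p : ℂ[X]) {N : Matrix m m ℂ} (hN : IsUnit N) (M : Matrix m m ℂ) :
    aeval (N * M * N⁻¹) p = N * aeval M p * N⁻¹ := by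
  have hd : IsUnit N.det := (Matrix.isUnit_iff_isUnit_det N).mp hN
  have h1 : N⁻¹ * N = 1 := Matrix.nonsing_inv_mul N hd
  have h2 : N * N⁻¹ = 1 := Matrix.mul_nonsing_inv N hd
  let φ : Matrix m m ℂ →ₐ[ℂ] Matrix m m ℂ :=
  { toFun := fun M => N * M * N⁻¹
    map_one' := by show N * 1 * N⁻¹ = 1; rw [mul_one, h2]
    map_mul' := fun X Y => by
      show N * (X * Y) * N⁻¹ = N * X * N⁻¹ * (N * Y * N⁻¹)
      calc N * (X * Y) * N⁻¹ = N * X * (N⁻¹ * N) * Y * N⁻¹ := by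
            rw [h1, mul_one]; noncomm_ring
        _ = N * X * N⁻¹ * (N * Y * N⁻¹) := by noncomm_ring
    map_zero' := by simp
    map_add' := fun X Y => by noncomm_ring
    commutes' := fun c => by
      simp [Algebra.algebraMap_eq_smul_one]
      rw [h2] }
  exact (aeval_algHom_apply φ M p)


lemma aeval_diagonal' (p : ℂ[X]) (d : m → ℂ) :
    aeval (diagonal d) p = diagonal (fun i => p.eval (d i)) := by
  have h := aeval_algHom_apply (Matrix.diagonalAlgHom (n := m) (α := ℂ) ℂ) d p
  simp only [Matrix.diagonalAlgHom_apply] at h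
  rw [h]
  have key : (aeval d) p = fun i => p.eval (d i) := by
    funext i
    have h2 := aeval_algHom_apply (Pi.evalAlgHom ℂ (fun _ : m => ℂ) i) d p
    simp only [Pi.evalAlgHom_apply] at h2
    rw [← h2]
    simp [aeval_def, eval₂_eq_eval_map]
  rw [key]

lemma mfun_eq_aeval {A : Matrix m m ℂ} (hA : A.IsHermitian) (f : ℝ → ℝ) (p : ℂ[X])
    (h : ∀ i, p.eval ((hA.eigenvalues i : ℝ) : ℂ) = ((f (hA.eigenvalues i) : ℝ) : ℂ)) :
    mfun f A = aeval A p := by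
  rw [mfun, dif_pos hA]
  conv_rhs => rw [hA.spectral_theorem, Unitary.conjStarAlgAut_apply]
  have hU : IsUnit (hA.eigenvectorUnitary : Matrix m m ℂ) :=
    ⟨Unitary.toUnits hA.eigenvectorUnitary, rfl⟩
  have hstar : star (hA.eigenvectorUnitary : Matrix m m ℂ) = (hA.eigenvectorUnitary : Matrix m m ℂ)⁻¹ := by
    rw [Matrix.inv_eq_left_inv]
    exact Matrix.mem_unitaryGroup_iff'.mp hA.eigenvectorUnitary.2
  rw [hstar, aeval_conj _ hU, aeval_diagonal']
  have key : (fun i => p.eval ((RCLike.ofReal ∘ hA.eigenvalues) i)) =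
      fun i => ((f (hA.eigenvalues i) : ℝ) : ℂ) := by
    funext i
    exact h i
  rw [key]

lemma unitary_isUnit {U : Matrix m m ℂ} (hU : U ∈ Matrix.unitaryGroup m ℂ) : IsUnit U :=
  ⟨Unitary.toUnits ⟨U, hU⟩, rfl⟩

lemma unitary_star_eq_inv {U : Matrix m m ℂ} (hU : U ∈ Matrix.unitaryGroup m ℂ) :
    star U = U⁻¹ :=
  (Matrix.inv_eq_left_inv (Matrix.mem_unitaryGroup_iff'.mp hU)).symm

lemma isHermitian_unitary_diag {U : Matrix m m ℂ} (hU : U ∈ Matrix.unitaryGroup m ℂ)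
    (d : m → ℝ) : (U * diagonal (fun i => (d i : ℂ)) * star U).IsHermitian := by
  rw [Matrix.star_eq_conjTranspose]
  exact Matrix.isHermitian_mul_mul_conjTranspose U
    (Matrix.isHermitian_diagonal_iff.mpr fun i => Complex.conj_ofReal (d i))

lemma mfun_unitary_diag (f : ℝ → ℝ) {U : Matrix m m ℂ} (hU : U ∈ Matrix.unitaryGroup m ℂ)
    (d : m → ℝ) :
    mfun f (U * diagonal (fun i => (d i : ℂ)) * star U) =
      U * diagonal (fun i => (f (d i) : ℂ)) * star U := by
  set M := U * diagonal (fun i => (d i : ℂ)) * star U with hMdef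
  have hM : M.IsHermitian := isHermitian_unitary_diag hU d
  set nodes : Finset ℂ :=
    (Finset.univ.image fun i => ((hM.eigenvalues i : ℝ) : ℂ)) ∪
      (Finset.univ.image fun i => ((d i : ℝ) : ℂ)) with hnodes
  set g : ℂ → ℂ := fun z => ((f z.re : ℝ) : ℂ) with hg
  set p := Lagrange.interpolate nodes id g with hp
  have hinterp : ∀ z ∈ nodes, p.eval z = g z := fun z hz => by
    exact Lagrange.eval_interpolate_at_node g (Set.injOn_id _) hz
  have h1 : mfun f M = aeval M p := by
    apply mfun_eq_aeval hM f p
    intro i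
    have hz : ((hM.eigenvalues i : ℝ) : ℂ) ∈ nodes := by
      rw [hnodes]
      exact Finset.mem_union_left _ (Finset.mem_image_of_mem _ (Finset.mem_univ i))
    rw [hinterp _ hz, hg]
    simp
  rw [h1, hMdef, unitary_star_eq_inv hU, aeval_conj _ (unitary_isUnit hU), aeval_diagonal']
  have key : (fun i => p.eval ((d i : ℂ))) = fun i => ((f (d i) : ℝ) : ℂ) := by
    funext i
    have hz : ((d i : ℝ) : ℂ) ∈ nodes := by
      rw [hnodes]
      exact Finset.mem_union_right _ (Finset.mem_image_of_mem _ (Finset.mem_univ i))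
    rw [hinterp _ hz, hg]
    simp
  rw [key]

lemma mfun_of_isHermitian {A : Matrix m m ℂ} (hA : A.IsHermitian) (f : ℝ → ℝ) :
    mfun f A = (hA.eigenvectorUnitary : Matrix m m ℂ) *
      Matrix.diagonal (fun i => (f (hA.eigenvalues i) : ℂ)) *
      (star (hA.eigenvectorUnitary : Matrix m m ℂ)) := by
  rw [mfun, dif_pos hA]

lemma trace_mfun {A : Matrix m m ℂ} (hA : A.IsHermitian) (f : ℝ → ℝ) :
    (mfun f A).trace = ∑ i, ((f (hA.eigenvalues i) : ℝ) : ℂ) := by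
  rw [mfun_of_isHermitian hA, Matrix.trace_mul_comm, ← Matrix.mul_assoc,
    Matrix.mem_unitaryGroup_iff'.mp hA.eigenvectorUnitary.2, one_mul, Matrix.trace_diagonal]

lemma trace_mfun_re {A : Matrix m m ℂ} (hA : A.IsHermitian) (f : ℝ → ℝ) :
    (mfun f A).trace.re = ∑ i, f (hA.eigenvalues i) := by
  rw [trace_mfun hA]
  rw [← Complex.ofReal_sum]
  exact Complex.ofReal_re _

lemma posDef_mfun {A : Matrix m m ℂ} (hA : A.PosDef) (f : ℝ → ℝ)
    (hf : ∀ i, 0 < f (hA.1.eigenvalues i)) : (mfun f A).PosDef := by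
  rw [mfun_of_isHermitian hA.1, Matrix.star_eq_conjTranspose]
  exact posDef_conj (Matrix.PosDef.diagonal fun i => by
    simpa using Complex.zero_lt_real.mpr (hf i)) (unitary_isUnit hA.1.eigenvectorUnitary.2)

lemma isHermitian_mfun {A : Matrix m m ℂ} (hA : A.IsHermitian) (f : ℝ → ℝ) :
    (mfun f A).IsHermitian := by
  rw [mfun_of_isHermitian hA]
  exact isHermitian_unitary_diag hA.eigenvectorUnitary.2 _

lemma mfun_mul_mfun {A : Matrix m m ℂ} (hA : A.IsHermitian) (f g : ℝ → ℝ) :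
    mfun f A * mfun g A = mfun (f * g) A := by
  rw [mfun_of_isHermitian hA, mfun_of_isHermitian hA, mfun_of_isHermitian hA]
  set U := (hA.eigenvectorUnitary : Matrix m m ℂ)
  have h1 : star U * U = 1 := Matrix.mem_unitaryGroup_iff'.mp hA.eigenvectorUnitary.2
  calc U * diagonal (fun i => (f (hA.eigenvalues i) : ℂ)) * star U *
        (U * diagonal (fun i => (g (hA.eigenvalues i) : ℂ)) * star U)
      = U * (diagonal (fun i => (f (hA.eigenvalues i) : ℂ)) * ((star U * U) *
          diagonal (fun i => (g (hA.eigenvalues i) : ℂ)))) * star U := by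
        simp only [Matrix.mul_assoc]
    _ = U * diagonal (fun i => ((f * g) (hA.eigenvalues i) : ℂ)) * star U := by
        rw [h1, one_mul, Matrix.diagonal_mul_diagonal]
        simp only [Matrix.mul_assoc]
        norm_cast

lemma mpow_posDef {A : Matrix m m ℂ} (hA : A.PosDef) (p : ℝ) : (mpow A p).PosDef :=
  posDef_mfun hA _ (fun i => Real.rpow_pos_of_pos (hA.eigenvalues_pos i) p)

lemma mpow_isHermitian {A : Matrix m m ℂ} (hA : A.IsHermitian) (p : ℝ) :
    (mpow A p).IsHermitian := isHermitian_mfun hA _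

lemma mpow_mul_mpow {A : Matrix m m ℂ} (hA : A.PosDef) (p q : ℝ) :
    mpow A p * mpow A q = mpow A (p + q) := by
  rw [mpow, mpow, mpow, mfun_mul_mfun hA.1]
  rw [mfun_of_isHermitian hA.1, mfun_of_isHermitian hA.1]
  refine congrArg₂ _ (congrArg₂ _ rfl (congrArg _ (funext fun i => ?_))) rfl
  simp only [Pi.mul_apply]
  norm_cast
  exact (Real.rpow_add (hA.eigenvalues_pos i) p q).symm

lemma mpow_one {A : Matrix m m ℂ} (hA : A.IsHermitian) : mpow A 1 = A := by
  rw [mpow]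
  have : (fun x : ℝ => x ^ (1 : ℝ)) = fun x => x := funext fun x => Real.rpow_one x
  rw [this]
  conv_rhs => rw [hA.spectral_theorem]
  rw [mfun_of_isHermitian hA]
  rfl

lemma mpow_mul_mpow_eq_one {A : Matrix m m ℂ} (hA : A.PosDef) (p : ℝ) :
    mpow A p * mpow A (-p) = 1 := by
  rw [mpow_mul_mpow hA, add_neg_cancel, mpow]
  have h0 : ∀ i, ((hA.1.eigenvalues i : ℝ) ^ (0:ℝ) : ℝ) = 1 := fun i =>
    Real.rpow_zero _
  rw [mfun_of_isHermitian hA.1]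
  have : (fun i => (((fun x : ℝ => x ^ (0:ℝ)) (hA.1.eigenvalues i) : ℝ) : ℂ)) =
      fun _ => (1 : ℂ) := by
    funext i; simp [Real.rpow_zero]
  rw [this, Matrix.diagonal_one, mul_one, Matrix.mem_unitaryGroup_iff.mp hA.1.eigenvectorUnitary.2]

lemma mpow_mpow {A : Matrix m m ℂ} (hA : A.PosDef) (p q : ℝ) :
    mpow (mpow A p) q = mpow A (p * q) := by
  rw [mpow, mpow, mfun_of_isHermitian hA.1]
  rw [mfun_unitary_diag _ hA.1.eigenvectorUnitary.2 (fun i => hA.1.eigenvalues i ^ p)]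
  rw [mpow, mfun_of_isHermitian hA.1]
  refine congrArg₂ _ (congrArg₂ _ rfl (congrArg _ (funext fun i => ?_))) rfl
  norm_cast
  rw [← Real.rpow_mul (hA.eigenvalues_pos i).le]

lemma trace_mfun_conj {A B N : Matrix m m ℂ} (hA : A.IsHermitian) (hB : B.IsHermitian)
    (hN : IsUnit N) (hAB : B = N * A * N⁻¹) (f : ℝ → ℝ) :
    (mfun f B).trace = (mfun f A).trace := by
  classical
  set nodes : Finset ℂ :=
    (Finset.univ.image fun i => ((hA.eigenvalues i : ℝ) : ℂ)) ∪
      (Finset.univ.image fun i => ((hB.eigenvalues i : ℝ) : ℂ)) with hnodes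
  set g : ℂ → ℂ := fun z => ((f z.re : ℝ) : ℂ) with hg
  set p := Lagrange.interpolate nodes id g with hp
  have hinterp : ∀ z ∈ nodes, p.eval z = g z := fun z hz => by
    exact Lagrange.eval_interpolate_at_node g (Set.injOn_id _) hz
  have hA' : mfun f A = aeval A p := by
    refine mfun_eq_aeval hA f p fun i => ?_
    rw [hinterp _ (Finset.mem_union_left _ (Finset.mem_image_of_mem _ (Finset.mem_univ i))), hg]
    simp
  have hB' : mfun f B = aeval B p := by
    refine mfun_eq_aeval hB f p fun i => ?_
    rw [hinterp _ (Finset.mem_union_right _ (Finset.mem_image_of_mem _ (Finset.mem_univ i))), hg]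
    simp
  rw [hA', hB', hAB, aeval_conj p hN]
  rw [Matrix.trace_mul_comm, ← Matrix.mul_assoc,
    Matrix.nonsing_inv_mul N ((Matrix.isUnit_iff_isUnit_det N).mp hN), one_mul]

lemma scalar_young {α : ℝ} (hα0 : 0 < α) (hα1 : α < 1) {a x : ℝ} (ha : 0 < a) (hx : 0 ≤ x) :
    x ^ α ≤ α * (a * x) + (1 - α) * a ^ (α / (α - 1)) := by
  rcases eq_or_lt_of_le hx with h | hx
  · rw [← h, Real.zero_rpow (ne_of_gt hα0), mul_zero, mul_zero, zero_add]
    have : (0:ℝ) < a ^ (α / (α - 1)) := Real.rpow_pos_of_pos ha _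
    nlinarith
  · have key : x ^ α = (a * x) ^ α * (a ^ (α / (α - 1))) ^ (1 - α) := by
      rw [Real.mul_rpow ha.le hx.le, ← Real.rpow_mul ha.le]
      have hne : α - 1 ≠ 0 := by linarith
      have : α / (α - 1) * (1 - α) = -α := by field_simp; ring
      rw [this, Real.rpow_neg ha.le]
      field_simp
    rw [key]
    exact Real.geom_mean_le_arith_mean2_weighted hα0.le (by linarith)
      (by positivity) (by positivity) (by ring)

lemma jensen_rpow {α : ℝ} (hα0 : 0 < α) (hα1 : α < 1) (c l : m → ℝ)
    (hc : ∀ j, 0 ≤ c j) (hc1 : ∑ j, c j = 1) (hl : ∀ j, 0 ≤ l j) :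
    ∑ j, c j * (l j) ^ α ≤ (∑ j, c j * l j) ^ α := by
  have := (Real.concaveOn_rpow hα0.le hα1.le).le_map_sum
    (t := Finset.univ) (w := c) (p := l) (fun j _ => hc j) hc1 (fun j _ => hl j)
  simpa [smul_eq_mul] using this

lemma trace_diagonal_mul' (d : m → ℂ) (M : Matrix m m ℂ) :
    (diagonal d * M).trace = ∑ i, d i * M i i := by
  simp [Matrix.trace, Matrix.diag, Matrix.diagonal_mul]

lemma trace_conj_mul' (U D Y : Matrix m m ℂ) :
    (U * D * star U * Y).trace = (D * (star U * Y * U)).trace := by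
  rw [show U * D * star U * Y = U * (D * (star U * Y)) by simp only [Matrix.mul_assoc]]
  rw [Matrix.trace_mul_comm]
  simp only [Matrix.mul_assoc]

lemma young_trace_ineq {X K : Matrix m m ℂ} (hX : X.PosDef) (hK : K.PosDef)
    {α : ℝ} (hα0 : 0 < α) (hα1 : α < 1) :
    (mfun (fun x => x ^ α) X).trace.re ≤
      α * ((K * X).trace).re + (1 - α) * (mfun (fun x => x ^ (α / (α - 1))) K).trace.re := by
  classical
  set U : Matrix m m ℂ := (hK.1.eigenvectorUnitary : Matrix m m ℂ) with hUdef
  set a : m → ℝ := hK.1.eigenvalues with hadef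
  set V : Matrix m m ℂ := (hX.1.eigenvectorUnitary : Matrix m m ℂ) with hVdef
  set l : m → ℝ := hX.1.eigenvalues with hldef
  set W : Matrix m m ℂ := star V * U with hWdef
  have hWmem : W ∈ Matrix.unitaryGroup m ℂ :=
    mul_mem (Unitary.star_mem hX.1.eigenvectorUnitary.2) hK.1.eigenvectorUnitary.2
  set c : m → m → ℝ := fun i j => Complex.normSq (W j i) with hcdef
  have hc0 : ∀ i j, 0 ≤ c i j := fun i j => Complex.normSq_nonneg _
  set x : m → ℝ := fun i => ∑ j, c i j * l j with hxdef
  have hl0 : ∀ j, 0 ≤ l j := fun j => (hX.eigenvalues_pos j).le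
  have ha0 : ∀ i, 0 < a i := fun i => hK.eigenvalues_pos i
  have hx0 : ∀ i, 0 ≤ x i := fun i =>
    Finset.sum_nonneg fun j _ => mul_nonneg (hc0 i j) (hl0 j)
  -- row sums
  have hrow : ∀ i, ∑ j, c i j = 1 := by
    intro i
    have hWW : star W * W = 1 := Matrix.mem_unitaryGroup_iff'.mp hWmem
    have h := congrFun (congrFun hWW i) i
    rw [Matrix.mul_apply] at h
    simp only [Matrix.star_apply, Matrix.one_apply_eq] at h
    have h2 : ∑ j, ((c i j : ℝ) : ℂ) = 1 := by
      rw [← h]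
      refine Finset.sum_congr rfl fun j _ => ?_
      rw [hcdef, ← Complex.mul_conj]
      ring_nf
      rfl
    exact_mod_cast h2
  have hcol : ∀ j, ∑ i, c i j = 1 := by
    intro j
    have hWW : W * star W = 1 := Matrix.mem_unitaryGroup_iff.mp hWmem
    have h := congrFun (congrFun hWW j) j
    rw [Matrix.mul_apply] at h
    simp only [Matrix.star_apply, Matrix.one_apply_eq] at h
    have h2 : ∑ i, ((c i j : ℝ) : ℂ) = 1 := by
      rw [← h]
      refine Finset.sum_congr rfl fun i _ => ?_
      rw [hcdef, ← Complex.mul_conj]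
      rfl
    exact_mod_cast h2
  -- trace formula
  have hMeq : star U * X * U = star W * diagonal (RCLike.ofReal ∘ l) * W := by
    conv_lhs => rw [hX.1.spectral_theorem, Unitary.conjStarAlgAut_apply]
    rw [hWdef]
    simp only [Matrix.star_mul, star_star, Matrix.mul_assoc]
    rfl
  have hMentry : ∀ i, (star U * X * U) i i = ((x i : ℝ) : ℂ) := by
    intro i
    rw [hMeq, Matrix.mul_assoc, Matrix.mul_apply]
    simp only [Matrix.diagonal_mul, Matrix.star_apply]
    have key : ∀ j, star (W j i) * ((RCLike.ofReal ∘ l) j * W j i) =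
        ((c i j * l j : ℝ) : ℂ) := by
      intro j
      rw [show (star (W j i)) * ((RCLike.ofReal ∘ l) j * W j i) =
        (RCLike.ofReal ∘ l) j * (W j i * star (W j i)) by ring]
      rw [show (star (W j i)) = (starRingEnd ℂ) (W j i) from rfl, Complex.mul_conj]
      rw [show ((RCLike.ofReal ∘ l) j : ℂ) = ((l j : ℝ) : ℂ) from rfl]
      push_cast
      ring
    rw [Finset.sum_congr rfl (fun j _ => key j), hxdef]
    push_cast
    rfl
  have hKX : ((K * X).trace).re = ∑ i, a i * x i := by
    have h1 : (K * X).trace = (diagonal (RCLike.ofReal ∘ a) * (star U * X * U)).trace := by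
      conv_lhs => rw [hK.1.spectral_theorem]
      exact trace_conj_mul' U _ X
    rw [h1, trace_diagonal_mul']
    have : ∀ i, (RCLike.ofReal ∘ a) i * (star U * X * U) i i = ((a i * x i : ℝ) : ℂ) := by
      intro i
      rw [hMentry i]
      push_cast
      rfl
    rw [Finset.sum_congr rfl (fun i _ => this i), ← Complex.ofReal_sum, Complex.ofReal_re]
  -- put together
  rw [trace_mfun_re hX.1, trace_mfun_re hK.1, hKX]
  calc ∑ j, l j ^ α = ∑ j, (∑ i, c i j) * l j ^ α := by
        refine Finset.sum_congr rfl fun j _ => ?_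
        rw [hcol j, one_mul]
    _ = ∑ i, ∑ j, c i j * l j ^ α := by
        rw [Finset.sum_comm]
        exact Finset.sum_congr rfl fun j _ => by rw [Finset.sum_mul]
    _ ≤ ∑ i, x i ^ α := by
        refine Finset.sum_le_sum fun i _ => ?_
        exact jensen_rpow hα0 hα1 (c i) l (hc0 i) (hrow i) hl0
    _ ≤ ∑ i, (α * (a i * x i) + (1 - α) * a i ^ (α / (α - 1))) := by
        refine Finset.sum_le_sum fun i _ => ?_
        exact scalar_young hα0 hα1 (ha0 i) (hx0 i)
    _ = α * ∑ i, a i * x i + (1 - α) * ∑ i, a i ^ (α / (α - 1)) := by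
        rw [Finset.sum_add_distrib, Finset.mul_sum, Finset.mul_sum]

lemma posDef_sandwich {σ H : Matrix m m ℂ} (hσ : σ.PosDef) (hH : H.PosDef) (β : ℝ) :
    (mpow σ β * H * mpow σ β).PosDef := by
  have h := posDef_conj hH (mpow_posDef hσ β).isUnit
  rwa [(mpow_isHermitian hσ.1 β).eq] at h

lemma trace_sandwich_eq {σ H : Matrix m m ℂ} (hσ : σ.PosDef) (hH : H.PosDef) (β γ : ℝ) :
    (mpow (mpow H (1/2) * mpow σ (2*β) * mpow H (1/2)) γ).trace =
      (mpow (mpow σ β * H * mpow σ β) γ).trace := by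
  set S := mpow σ β with hS
  set R := mpow H (1/2) with hR
  have hSh : S.IsHermitian := mpow_isHermitian hσ.1 β
  have hRh : R.IsHermitian := mpow_isHermitian hH.1 (1/2)
  have hSpd : S.PosDef := mpow_posDef hσ β
  have hRpd : R.PosDef := mpow_posDef hH (1/2)
  set N := S * R with hN
  have hNu : IsUnit N := hSpd.isUnit.mul hRpd.isUnit
  have hSS : S * S = mpow σ (2*β) := by
    rw [hS, mpow_mul_mpow hσ]
    ring_nf
  have hRR : R * R = H := by
    rw [hR, mpow_mul_mpow hH]
    norm_num
    exact mpow_one hH.1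
  have hA' : R * mpow σ (2*β) * R = Nᴴ * N := by
    rw [hN, Matrix.conjTranspose_mul, hSh.eq, hRh.eq, ← hSS]
    simp only [Matrix.mul_assoc]
  have hK : S * H * S = N * Nᴴ := by
    rw [hN, Matrix.conjTranspose_mul, hSh.eq, hRh.eq, ← hRR]
    simp only [Matrix.mul_assoc]
  have hKA' : S * H * S = N * (R * mpow σ (2*β) * R) * N⁻¹ := by
    rw [hA', hK, ← Matrix.mul_assoc, Matrix.mul_assoc (N * Nᴴ),
      Matrix.mul_nonsing_inv N ((Matrix.isUnit_iff_isUnit_det N).mp hNu), mul_one,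
      Matrix.mul_assoc]
  have hA'pd : (R * mpow σ (2*β) * R).PosDef := by
    rw [hA']
    have h := posDef_conj Matrix.PosDef.one ((Matrix.isUnit_conjTranspose N).mpr hNu)
    rwa [mul_one, Matrix.conjTranspose_conjTranspose] at h
  have hKpd : (S * H * S).PosDef := by
    have h := posDef_conj hH hSpd.isUnit
    rwa [hSh.eq] at h
  exact (trace_mfun_conj hA'pd.1 hKpd.1 hNu hKA' _).symm

theorem variational_formula_inf {n : ℕ} (ρ σ : Matrix (Fin n) (Fin n) ℂ)
    (hρ : ρ.PosDef) (hσ : σ.PosDef) (α : ℝ) (hα0 : 0 < α) (hα1 : α < 1)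
    (β : ℝ) (hβ : β = (α - 1) / (2 * α)) :
    IsGLB {x : ℝ | ∃ H : Matrix (Fin n) (Fin n) ℂ, H.PosDef ∧
        x = α * (H * ρ).trace.re -
          (α - 1) * (mpow (mpow H (1/2) * mpow σ (2 * β) * mpow H (1/2)) (α / (α - 1))).trace.re}
      ((mpow (mpow σ (-β) * ρ * mpow σ (-β)) α).trace.re) := by
  classical
  have hα1' : α - 1 ≠ 0 := by linarith
  set γ := α / (α - 1) with hγ
  set S := mpow σ β with hS
  set Sm := mpow σ (-β) with hSm
  set X := Sm * ρ * Sm with hXdef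
  have hXpd : X.PosDef := by
    have h := posDef_conj hρ (mpow_posDef hσ (-β)).isUnit
    rwa [(mpow_isHermitian hσ.1 (-β)).eq] at h
  have hSSm : S * Sm = 1 := mpow_mul_mpow_eq_one hσ β
  have hSmS : Sm * S = 1 := by
    have h := mpow_mul_mpow_eq_one hσ (-β)
    rwa [neg_neg] at h
  have hρX : ρ = S * X * S := by
    rw [hXdef]
    calc ρ = (S * Sm) * ρ * (Sm * S) := by rw [hSSm, hSmS, one_mul, mul_one]
      _ = S * (Sm * ρ * Sm) * S := by simp only [Matrix.mul_assoc]
  have hval : ∀ H : Matrix (Fin n) (Fin n) ℂ, H.PosDef →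
      α * (H * ρ).trace.re -
        (α - 1) * (mpow (mpow H (1/2) * mpow σ (2 * β) * mpow H (1/2)) γ).trace.re
      = α * ((S * H * S) * X).trace.re +
        (1 - α) * (mfun (fun x => x ^ γ) (S * H * S)).trace.re := by
    intro H hH
    have h1 : (H * ρ).trace = ((S * H * S) * X).trace := by
      conv_lhs => rw [hρX]
      rw [show H * (S * X * S) = (H * S * X) * S by simp only [Matrix.mul_assoc]]
      rw [Matrix.trace_mul_comm]
      rw [show S * (H * S * X) = (S * H * S) * X by simp only [Matrix.mul_assoc]]
    have h2 := trace_sandwich_eq hσ hH β γ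
    rw [h1, h2]
    have h3 : (mpow (S * H * S) γ) = mfun (fun x => x ^ γ) (S * H * S) := rfl
    rw [h3]
    ring
  constructor
  · rintro y ⟨H, hH, rfl⟩
    rw [hval H hH]
    exact young_trace_ineq hXpd (posDef_sandwich hσ hH β) hα0 hα1
  · intro b hb
    refine hb ⟨Sm * mpow X (α - 1) * Sm, ?_, ?_⟩
    · have h := posDef_conj (mpow_posDef hXpd (α - 1)) (mpow_posDef hσ (-β)).isUnit
      rwa [(mpow_isHermitian hσ.1 (-β)).eq] at h
    · have hH₀pd : (Sm * mpow X (α - 1) * Sm).PosDef := by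
        have h := posDef_conj (mpow_posDef hXpd (α - 1)) (mpow_posDef hσ (-β)).isUnit
        rwa [(mpow_isHermitian hσ.1 (-β)).eq] at h
      rw [hval _ hH₀pd]
      have hK₀ : S * (Sm * mpow X (α - 1) * Sm) * S = mpow X (α - 1) := by
        calc S * (Sm * mpow X (α - 1) * Sm) * S
            = (S * Sm) * mpow X (α - 1) * (Sm * S) := by simp only [Matrix.mul_assoc]
          _ = mpow X (α - 1) := by rw [hSSm, hSmS, one_mul, mul_one]
      rw [hK₀]
      have e1 : mpow X (α - 1) * X = mpow X α := by
        nth_rewrite 2 [← mpow_one hXpd.1]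
        rw [mpow_mul_mpow hXpd, show α - 1 + 1 = α by ring]
      have e2 : mfun (fun x => x ^ γ) (mpow X (α - 1)) = mpow X α := by
        have h4 : mfun (fun x => x ^ γ) (mpow X (α - 1)) = mpow (mpow X (α - 1)) γ := rfl
        rw [h4, mpow_mpow hXpd, show (α - 1) * γ = α by rw [hγ]; field_simp]
      rw [e1, e2]
      ring
end
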